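/- The function ψ_3D(s,t) is monotonically nondecreasing in each of its arguments s and t on the admissible region {(s,t): s^{1/2} ≤ t ≤ s²}. -/
import Mathlib


open Set

/-- Region L (liquid-like) of DeSimone–Dolzmann, in `(s,t)` variables. -/
def Lset (r : ℝ) : Set (ℝ × ℝ) :=
  {p | p.2 ≤ p.1 ^ 2 ∧ p.2 ≤ r ^ ((1 : ℝ) / 6) ∧ Real.sqrt p.1 ≤ p.2}

/-- Region M (stressed microstructure). -/
def Mset (r : ℝ) : Set (ℝ × ℝ) :=
  {p | p.2 ≤ p.1 ^ 2 ∧ r ^ (-(1 : ℝ) / 2) * p.1 ^ 2 ≤ p.2 ∧ r ^ ((1 : ℝ) / 6) ≤ p.2}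

/-- Region S (normal solid). -/
def Sset (r : ℝ) : Set (ℝ × ℝ) :=
  {p | p.2 ≤ r ^ (-(1 : ℝ) / 2) * p.1 ^ 2 ∧ Real.sqrt p.1 ≤ p.2}

/-- The M-branch formula of `ψ_3D`. -/
noncomputable def fM (μ r : ℝ) (p : ℝ × ℝ) : ℝ :=
  μ / 2 * (r ^ ((1 : ℝ) / 3) * (2 * p.2 / r ^ ((1 : ℝ) / 2) + 1 / p.2 ^ 2) - 3)

/-- The S-branch formula of `ψ_3D` (which is also `φ_3D`). -/
noncomputable def fS (μ r : ℝ) (p : ℝ × ℝ) : ℝ :=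
  μ / 2 * (r ^ ((1 : ℝ) / 3) * (p.1 ^ 2 / r + p.2 ^ 2 / p.1 ^ 2 + 1 / p.2 ^ 2) - 3)

open Classical in
/-- The relaxed energy function `ψ_3D` of DeSimone–Dolzmann. -/
noncomputable def psi3D (μ r : ℝ) (p : ℝ × ℝ) : ℝ :=
  if p ∈ Lset r then 0 else if p ∈ Mset r then fM μ r p else fS μ r p

/-- The admissible region `{(s,t) : s ≥ 0, t ≥ 0, s^{1/2} ≤ t ≤ s²}`. -/
def Adm : Set (ℝ × ℝ) :=
  {p | 0 ≤ p.1 ∧ 0 ≤ p.2 ∧ Real.sqrt p.1 ≤ p.2 ∧ p.2 ≤ p.1 ^ 2}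



section Aux

private lemma auxA (u s t : ℝ) (hu : 0 < u) (hs : 0 < s) (ht : 0 < t) :
    2*t/u^3 + 1/t^2 ≤ s^2/u^6 + t^2/s^2 + 1/t^2 := by
  have h : s^2/u^6 + t^2/s^2 + 1/t^2 - (2*t/u^3 + 1/t^2) = (s^2 - u^3*t)^2 / (u^6*s^2) := by
    field_simp; ring
  nlinarith [div_nonneg (sq_nonneg (s^2 - u^3*t)) (by positivity : (0:ℝ) ≤ u^6*s^2)]

private lemma auxD (u t : ℝ) (hu : 0 < u) (ht : 0 < t) :
    3 ≤ u^2 * (2*t/u^3 + 1/t^2) := by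
  have h : u^2*(2*t/u^3 + 1/t^2) - 3 = (t-u)^2*(2*t+u)/(u*t^2) := by field_simp; ring
  nlinarith [div_nonneg (mul_nonneg (sq_nonneg (t-u)) (by positivity : (0:ℝ) ≤ 2*t+u))
    (by positivity : (0:ℝ) ≤ u*t^2)]

private lemma auxB (u t₁ t₂ : ℝ) (hu : 0 < u) (ht : u ≤ t₁) (h12 : t₁ ≤ t₂) :
    2*t₁/u^3 + 1/t₁^2 ≤ 2*t₂/u^3 + 1/t₂^2 := by
  have ht₁ : 0 < t₁ := lt_of_lt_of_le hu ht
  have ht₂ : 0 < t₂ := ht₁.trans_le h12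
  have h : 2*t₂/u^3 + 1/t₂^2 - (2*t₁/u^3 + 1/t₁^2)
      = ((t₂-t₁)*(2*t₁^2*t₂^2 - u^3*(t₁+t₂)))/(u^3*t₁^2*t₂^2) := by field_simp; ring
  have h1 : u^3 ≤ t₁^3 := pow_le_pow_left₀ hu.le ht 3
  have hnum : 0 ≤ (t₂-t₁)*(2*t₁^2*t₂^2 - u^3*(t₁+t₂)) := by
    apply mul_nonneg (by linarith)
    nlinarith [mul_le_mul_of_nonneg_right h1 ht₁.le, mul_le_mul_of_nonneg_right h1 ht₂.le,
      mul_pos ht₁ ht₂, sq_nonneg (t₁*t₂ - t₁^2),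
      mul_le_mul_of_nonneg_left h12 (by positivity : (0:ℝ) ≤ t₁^3),
      mul_le_mul_of_nonneg_left (mul_le_mul_of_nonneg_right h12 ht₂.le)
        (by positivity : (0:ℝ) ≤ t₁^2)]
  nlinarith [div_nonneg hnum (by positivity : (0:ℝ) ≤ u^3*t₁^2*t₂^2)]

private lemma auxC (u t s₁ s₂ : ℝ) (hu : 0 < u) (ht : 0 < t) (hs₁ : 0 < s₁) (h12 : s₁ ≤ s₂)
    (hb : u^3*t ≤ s₁^2) :
    s₁^2/u^6 + t^2/s₁^2 + 1/t^2 ≤ s₂^2/u^6 + t^2/s₂^2 + 1/t^2 := by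
  have hs₂ : 0 < s₂ := hs₁.trans_le h12
  have h : (s₂^2/u^6 + t^2/s₂^2 + 1/t^2) - (s₁^2/u^6 + t^2/s₁^2 + 1/t^2)
      = ((s₂^2-s₁^2)*(s₁^2*s₂^2 - u^6*t^2))/(u^6*s₁^2*s₂^2) := by field_simp; ring
  have hb₂ : u^3*t ≤ s₂^2 := hb.trans (by nlinarith)
  have hnum : 0 ≤ (s₂^2-s₁^2)*(s₁^2*s₂^2 - u^6*t^2) := by
    apply mul_nonneg (by nlinarith)
    nlinarith [mul_le_mul hb hb₂ (by positivity) (by positivity)]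
  nlinarith [div_nonneg hnum (by positivity : (0:ℝ) ≤ u^6*s₁^2*s₂^2)]

private lemma auxF (u s t₁ t₂ : ℝ) (hu : 0 < u) (hs : 0 < s) (ht₁ : 0 < t₁) (h12 : t₁ ≤ t₂)
    (hb1 : s ≤ t₁^2) :
    s^2/u^6 + t₁^2/s^2 + 1/t₁^2 ≤ s^2/u^6 + t₂^2/s^2 + 1/t₂^2 := by
  have ht₂ : 0 < t₂ := ht₁.trans_le h12
  have hb2 : s ≤ t₂^2 := hb1.trans (by nlinarith)
  have h : (s^2/u^6 + t₂^2/s^2 + 1/t₂^2) - (s^2/u^6 + t₁^2/s^2 + 1/t₁^2)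
      = ((t₂^2-t₁^2)*(t₁^2*t₂^2 - s^2))/(s^2*t₁^2*t₂^2) := by field_simp; ring
  have hnum : 0 ≤ (t₂^2-t₁^2)*(t₁^2*t₂^2 - s^2) := by
    apply mul_nonneg (by nlinarith)
    nlinarith [mul_le_mul hb1 hb2 hs.le (by positivity)]
  nlinarith [div_nonneg hnum (by positivity : (0:ℝ) ≤ s^2*t₁^2*t₂^2)]

private lemma bridgeA (μ r u : ℝ) (hμ : 0 < μ) (hu : 0 < u)
    (hw : r ^ ((1:ℝ)/2) = u^3) (hc : r ^ ((1:ℝ)/3) = u^2) (hr6 : r = u^6)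
    (p : ℝ × ℝ) (hs : 0 < p.1) (ht : 0 < p.2) : fM μ r p ≤ fS μ r p := by
  unfold fM fS
  rw [hc, hw, hr6]
  gcongr μ / 2 * (u^2 * ?_ - 3)
  exact auxA u p.1 p.2 hu hs ht

private lemma bridgeD (μ r u : ℝ) (hμ : 0 < μ) (hu : 0 < u)
    (hw : r ^ ((1:ℝ)/2) = u^3) (hc : r ^ ((1:ℝ)/3) = u^2)
    (p : ℝ × ℝ) (ht : 0 < p.2) : 0 ≤ fM μ r p := by
  unfold fM
  rw [hc, hw]
  have := auxD u p.2 hu ht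
  have h2 : (0:ℝ) ≤ μ/2 := by positivity
  nlinarith

private lemma bridgeB (μ r u : ℝ) (hμ : 0 < μ) (hu : 0 < u)
    (hw : r ^ ((1:ℝ)/2) = u^3) (hc : r ^ ((1:ℝ)/3) = u^2)
    (p q : ℝ × ℝ) (ht : u ≤ p.2) (h12 : p.2 ≤ q.2) : fM μ r p ≤ fM μ r q := by
  unfold fM
  rw [hc, hw]
  gcongr μ / 2 * (u^2 * ?_ - 3)
  exact auxB u p.2 q.2 hu ht h12

private lemma bridgeC (μ r u : ℝ) (hμ : 0 < μ) (hu : 0 < u)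
    (hc : r ^ ((1:ℝ)/3) = u^2) (hr6 : r = u^6)
    (p q : ℝ × ℝ) (hs : 0 < p.1) (ht : 0 < p.2) (h12 : p.1 ≤ q.1) (h2 : p.2 = q.2)
    (hb : u^3*p.2 ≤ p.1^2) : fS μ r p ≤ fS μ r q := by
  unfold fS
  rw [hc, hr6, ← h2]
  gcongr μ / 2 * (u^2 * ?_ - 3)
  exact auxC u p.2 p.1 q.1 hu ht hs h12 hb

private lemma bridgeF (μ r u : ℝ) (hμ : 0 < μ) (hu : 0 < u)
    (hc : r ^ ((1:ℝ)/3) = u^2) (hr6 : r = u^6)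
    (p q : ℝ × ℝ) (hs : 0 < p.1) (ht : 0 < p.2) (h1 : p.1 = q.1) (h12 : p.2 ≤ q.2)
    (hb : p.1 ≤ p.2^2) : fS μ r p ≤ fS μ r q := by
  unfold fS
  rw [hc, hr6, ← h1]
  gcongr μ / 2 * (u^2 * ?_ - 3)
  exact auxF u p.1 p.2 q.2 hu hs ht h12 hb

private lemma bridgeEq (μ r u : ℝ) (hu : 0 < u)
    (hw : r ^ ((1:ℝ)/2) = u^3) (hc : r ^ ((1:ℝ)/3) = u^2) (hr6 : r = u^6)
    (s : ℝ) (hs : 0 < s) : fS μ r (s, s^2/u^3) = fM μ r (s, s^2/u^3) := by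
  unfold fM fS
  rw [hc, hw, hr6]
  have hu' : u ≠ 0 := hu.ne'
  have hs' : s ≠ 0 := hs.ne'
  field_simp
  ring

end Aux

set_option maxHeartbeats 1000000 in
/-- `ψ_3D(s,t)` is monotonically nondecreasing in each argument on the admissible
region `{s^{1/2} ≤ t ≤ s²}`. -/
theorem psi3D_monotone (μ r : ℝ) (hμ : 0 < μ) (hr : 1 ≤ r) :
    (∀ p ∈ Adm, ∀ q ∈ Adm, p.1 ≤ q.1 → p.2 = q.2 → psi3D μ r p ≤ psi3D μ r q) ∧
    (∀ p ∈ Adm, ∀ q ∈ Adm, p.1 = q.1 → p.2 ≤ q.2 → psi3D μ r p ≤ psi3D μ r q) := by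
  have hr0 : (0:ℝ) < r := lt_of_lt_of_le one_pos hr
  obtain ⟨u, hu_def⟩ : ∃ u : ℝ, u = r ^ ((1:ℝ)/6) := ⟨_, rfl⟩
  have hu1 : 1 ≤ u := hu_def ▸ Real.one_le_rpow hr (by norm_num)
  have hu0 : (0:ℝ) < u := lt_of_lt_of_le one_pos hu1
  have hw : r ^ ((1:ℝ)/2) = u^3 := by
    rw [hu_def, ← Real.rpow_natCast (r ^ ((1:ℝ)/6)) 3, ← Real.rpow_mul hr0.le]; norm_num
  have hc : r ^ ((1:ℝ)/3) = u^2 := by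
    rw [hu_def, ← Real.rpow_natCast (r ^ ((1:ℝ)/6)) 2, ← Real.rpow_mul hr0.le]; norm_num
  have hr6 : r = u^6 := by
    rw [hu_def, ← Real.rpow_natCast (r ^ ((1:ℝ)/6)) 6, ← Real.rpow_mul hr0.le]; norm_num
  have hneg : r ^ (-(1:ℝ)/2) = (u^3)⁻¹ := by
    rw [neg_div, Real.rpow_neg hr0.le, hw]
  -- value lemmas
  have hvL : ∀ p, p ∈ Lset r → psi3D μ r p = 0 := fun p h => by simp [psi3D, h]
  have hvM : ∀ p, p ∉ Lset r → p ∈ Mset r → psi3D μ r p = fM μ r p := fun p h1 h2 => by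
    simp [psi3D, h1, h2]
  have hvS : ∀ p, p ∉ Lset r → p ∉ Mset r → psi3D μ r p = fS μ r p := fun p h1 h2 => by
    simp [psi3D, h1, h2]
  -- membership characterizations
  have memL : ∀ p : ℝ × ℝ, p ∈ Lset r ↔ (p.2 ≤ p.1^2 ∧ p.2 ≤ u ∧ Real.sqrt p.1 ≤ p.2) := by
    intro p
    simp only [Lset, Set.mem_setOf_eq, ← hu_def]
  have memM : ∀ p : ℝ × ℝ, p ∈ Mset r ↔ (p.2 ≤ p.1^2 ∧ (u^3)⁻¹ * p.1^2 ≤ p.2 ∧ u ≤ p.2) := by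
    intro p
    simp only [Mset, Set.mem_setOf_eq, ← hu_def, hneg]
  -- admissibility normalizations
  have hadm0 : ∀ p : ℝ × ℝ, p ∈ Adm → p.1 = 0 → p = ((0:ℝ), (0:ℝ)) := by
    intro p hp h0
    obtain ⟨h1, h2, h3, h4⟩ := hp
    have : p.2 = 0 := le_antisymm (by rw [h0] at h4; simpa using h4) h2
    exact Prod.ext h0 this
  have hadm1 : ∀ p : ℝ × ℝ, p ∈ Adm → p.1 ≠ 0 → 1 ≤ p.1 ∧ 1 ≤ p.2 ∧ p.1 ≤ p.2^2 := by
    intro p hp h0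
    obtain ⟨h1, h2, h3, h4⟩ := hp
    have hs0 : 0 < p.1 := lt_of_le_of_ne h1 (Ne.symm h0)
    have hsq : p.1 ≤ p.2^2 := by
      have := pow_le_pow_left₀ (Real.sqrt_nonneg p.1) h3 2
      rwa [Real.sq_sqrt h1] at this
    have h14 : p.1 ≤ p.1^4 := by nlinarith [pow_le_pow_left₀ h2 h4 2]
    have h3p : 1 ≤ p.1^3 := le_of_mul_le_mul_left (by nlinarith : p.1 * 1 ≤ p.1 * p.1^3) hs0
    have hs1 : 1 ≤ p.1 := by nlinarith [h3p, sq_nonneg (p.1 - 1), sq_nonneg (p.1 + 1), mul_pos hs0 hs0]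
    have ht1 : 1 ≤ p.2 := by nlinarith [sq_nonneg (p.2 - 1)]
    exact ⟨hs1, ht1, hsq⟩
  constructor
  · -- monotone in s
    intro p hp q hq h1 h2
    by_cases hp0 : p.1 = 0
    · have hpz := hadm0 p hp hp0
      have hq2 : q.2 = 0 := by rw [← h2, hpz]
      have hq1 : q.1 = 0 := by
        obtain ⟨g1, g2, g3, g4⟩ := hq
        have hsq0 : Real.sqrt q.1 = 0 := le_antisymm (hq2 ▸ g3) (Real.sqrt_nonneg _)
        have : q.1 ≤ 0 := Real.sqrt_eq_zero'.mp hsq0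
        linarith
      rw [hpz, hadm0 q hq hq1]
    · obtain ⟨hs1, ht1, hst⟩ := hadm1 p hp hp0
      have hq0 : q.1 ≠ 0 := by intro h; rw [h] at h1; linarith
      obtain ⟨hs1', ht1', hst'⟩ := hadm1 q hq hq0
      have hpadm := hp; obtain ⟨_, _, hp3, hp4⟩ := hpadm
      have hqadm := hq; obtain ⟨_, _, hq3, hq4⟩ := hqadm
      by_cases hLt : p.2 ≤ u
      · have hpL : p ∈ Lset r := (memL p).mpr ⟨hp4, hLt, hp3⟩
        have hqL : q ∈ Lset r := (memL q).mpr ⟨hq4, h2 ▸ hLt, hq3⟩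
        rw [hvL p hpL, hvL q hqL]
      · push_neg at hLt
        have hpL : p ∉ Lset r := fun h => absurd ((memL p).mp h).2.1 (not_le.mpr hLt)
        have hqL : q ∉ Lset r := fun h => absurd ((memL q).mp h).2.1
          (not_le.mpr (h2 ▸ hLt))
        by_cases hpM : p ∈ Mset r
        · by_cases hqM : q ∈ Mset r
          · rw [hvM p hpL hpM, hvM q hqL hqM]
            exact le_of_eq (by simp [fM, h2])
          · rw [hvM p hpL hpM, hvS q hqL hqM]
            have heq : fM μ r p = fM μ r q := by simp [fM, h2]
            rw [heq]
            exact bridgeA μ r u hμ hu0 hw hc hr6 q (by linarith) (by linarith)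
        · have hpM' : u^3 * p.2 < p.1^2 := by
            have hb : ¬ ((u^3)⁻¹ * p.1^2 ≤ p.2) := fun hb =>
              hpM ((memM p).mpr ⟨hp4, hb, hLt.le⟩)
            push_neg at hb
            have e : u^3 * ((u^3)⁻¹ * p.1^2) = p.1^2 := by field_simp
            nlinarith [mul_lt_mul_of_pos_left hb (by positivity : (0:ℝ) < u^3)]
          by_cases hqM : q ∈ Mset r
          · exfalso
            have hqb : q.1^2 ≤ u^3 * q.2 := by
              have := ((memM q).mp hqM).2.1
              have e : u^3 * ((u^3)⁻¹ * q.1^2) = q.1^2 := by field_simp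
              nlinarith [mul_le_mul_of_nonneg_left this (by positivity : (0:ℝ) ≤ u^3)]
            have : p.1^2 ≤ q.1^2 := by nlinarith
            rw [← h2] at hqb
            linarith
          · rw [hvS p hpL hpM, hvS q hqL hqM]
            exact bridgeC μ r u hμ hu0 hc hr6 p q (by linarith) (by linarith) h1 h2 hpM'.le
  · -- monotone in t
    intro p hp q hq h1 h2
    by_cases hp0 : p.1 = 0
    · have hpz := hadm0 p hp hp0
      have hq1 : q.1 = 0 := by rw [← h1, hp0]
      rw [hpz, hadm0 q hq hq1]
    · obtain ⟨hs1, ht1, hst⟩ := hadm1 p hp hp0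
      have hq0 : q.1 ≠ 0 := by rw [← h1]; exact hp0
      obtain ⟨hs1', ht1', hst'⟩ := hadm1 q hq hq0
      have hpadm := hp; obtain ⟨_, _, hp3, hp4⟩ := hpadm
      have hqadm := hq; obtain ⟨_, _, hq3, hq4⟩ := hqadm
      have hqnn : 0 ≤ psi3D μ r q := by
        by_cases hqL : q ∈ Lset r
        · rw [hvL q hqL]
        · by_cases hqM : q ∈ Mset r
          · rw [hvM q hqL hqM]
            exact bridgeD μ r u hμ hu0 hw hc q (by linarith)
          · rw [hvS q hqL hqM]
            exact le_trans (bridgeD μ r u hμ hu0 hw hc q (by linarith))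
              (bridgeA μ r u hμ hu0 hw hc hr6 q (by linarith) (by linarith))
      by_cases hpL : p ∈ Lset r
      · rw [hvL p hpL]; exact hqnn
      · have hLt : u < p.2 := by
          by_contra hcon
          push_neg at hcon
          exact hpL ((memL p).mpr ⟨hp4, hcon, hp3⟩)
        have hqL : q ∉ Lset r := fun h => absurd ((memL q).mp h).2.1
          (not_le.mpr (lt_of_lt_of_le hLt h2))
        by_cases hpM : p ∈ Mset r
        · by_cases hqM : q ∈ Mset r
          · rw [hvM p hpL hpM, hvM q hqL hqM]
            exact bridgeB μ r u hμ hu0 hw hc p q hLt.le h2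
          · rw [hvM p hpL hpM, hvS q hqL hqM]
            exact le_trans (bridgeB μ r u hμ hu0 hw hc p q hLt.le h2)
              (bridgeA μ r u hμ hu0 hw hc hr6 q (by linarith) (by linarith))
        · have hpM' : p.2 < (u^3)⁻¹ * p.1^2 := by
            have hb : ¬ ((u^3)⁻¹ * p.1^2 ≤ p.2) := fun hb =>
              hpM ((memM p).mpr ⟨hp4, hb, hLt.le⟩)
            push_neg at hb; exact hb
          have htstar : p.2 < p.1^2 / u^3 := by
            rwa [inv_mul_eq_div] at hpM'
          by_cases hqM : q ∈ Mset r
          · -- cross the M/S boundary at t* = p.1^2/u^3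
            have hqb : p.1^2 / u^3 ≤ q.2 := by
              have := ((memM q).mp hqM).2.1
              rw [← h1, inv_mul_eq_div] at this
              exact this
            rw [hvS p hpL hpM, hvM q hqL hqM]
            have step1 : fS μ r p ≤ fS μ r (p.1, p.1^2/u^3) :=
              bridgeF μ r u hμ hu0 hc hr6 p (p.1, p.1^2/u^3) (by linarith) (by linarith)
                rfl htstar.le hst
            have step2 : fS μ r (p.1, p.1^2/u^3) = fM μ r (p.1, p.1^2/u^3) :=
              bridgeEq μ r u hu0 hw hc hr6 p.1 (by linarith)
            have step3 : fM μ r (p.1, p.1^2/u^3) ≤ fM μ r q :=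
              bridgeB μ r u hμ hu0 hw hc (p.1, p.1^2/u^3) q (by simp; linarith) hqb
            calc fS μ r p ≤ fS μ r (p.1, p.1^2/u^3) := step1
              _ = fM μ r (p.1, p.1^2/u^3) := step2
              _ ≤ fM μ r q := step3
          · rw [hvS p hpL hpM, hvS q hqL hqM]
            exact bridgeF μ r u hμ hu0 hc hr6 p q (by linarith) (by linarith) h1 h2 hst
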